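/- Suppose two lower triangular 2×2 block operator matrices satisfy [[P*,Q*],[0,R*]]·[[P,0],[Q,R]] = [[P̃*,Q̃*],[0,R̃*]]·[[P̃,0],[Q̃,R̃]], and suppose ran Q ⊆ closure(ran R). Then there is a unique isometry V = [[V₁₁,0],[V₂₁,V₂₂]] (lower triangular) defined on closure(ran P) ⊕ closure(ran R) such that [[P̃,0],[Q̃,R̃]] = V·[[P,0],[Q,R]]. -/

import Mathlib

open ContinuousLinearMap

local notation "⟪" x ", " y "⟫" => @inner ℂ _ _ x y

theorem aux_extend {E F G : Type*} [NormedAddCommGroup E] [InnerProductSpace ℂ E]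
    [NormedAddCommGroup F] [InnerProductSpace ℂ F]
    [NormedAddCommGroup G] [InnerProductSpace ℂ G] [CompleteSpace G]
    (T : E →L[ℂ] F) (g : E →ₗ[ℂ] G) (hnorm : ∀ x, ‖g x‖ = ‖T x‖) :
    ∃ W : (LinearMap.range (T : E →ₗ[ℂ] F)).topologicalClosure →L[ℂ] G,
      (∀ x : E, W ⟨T x, Submodule.le_topologicalClosure _ (LinearMap.mem_range_self _ x)⟩ = g x) ∧
      (∀ u, ‖W u‖ = ‖u‖) ∧
      (∀ (p : (LinearMap.range (T : E →ₗ[ℂ] F)).topologicalClosure → Prop),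
        IsClosed {u | p u} →
        (∀ x : E, p ⟨T x, Submodule.le_topologicalClosure _ (LinearMap.mem_range_self _ x)⟩) →
        ∀ u, p u) := by
  classical
  have hgT : ∀ a b : E, T a = T b → g a = g b := by
    intro a b hab
    have h0 : g a - g b = 0 := by
      rw [← norm_eq_zero, ← map_sub, hnorm, map_sub, hab, sub_self, norm_zero]
    exact sub_eq_zero.mp h0
  have memex : ∀ v : LinearMap.range (T : E →ₗ[ℂ] F), ∃ x : E, T x = (v : F) := by
    rintro ⟨v, hv⟩
    obtain ⟨x, hx⟩ := hv
    exact ⟨x, hx⟩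
  let rep : LinearMap.range (T : E →ₗ[ℂ] F) → E := fun v => (memex v).choose
  have hrep : ∀ v, T (rep v) = (v : F) := fun v => (memex v).choose_spec
  let f₀ : LinearMap.range (T : E →ₗ[ℂ] F) →ₗ[ℂ] G :=
    { toFun := fun v => g (rep v)
      map_add' := by
        intro v w
        rw [← map_add g]
        apply hgT
        rw [map_add]
        simp [hrep]
      map_smul' := by
        intro c v
        simp only [RingHom.id_apply]
        rw [← map_smul g]
        apply hgT
        rw [map_smul]
        simp [hrep] }
  have hf₀ : ∀ (x : E) (h : T x ∈ LinearMap.range (T : E →ₗ[ℂ] F)), f₀ ⟨T x, h⟩ = g x := by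
    intro x h
    exact hgT _ _ (hrep ⟨T x, h⟩)
  have hf₀n : ∀ v, ‖f₀ v‖ = ‖v‖ := by
    intro v
    show ‖g (rep v)‖ = ‖v‖
    rw [hnorm, hrep]
    rfl
  let f : LinearMap.range (T : E →ₗ[ℂ] F) →L[ℂ] G :=
    f₀.mkContinuous 1 (fun v => by rw [hf₀n, one_mul])
  have hf : ∀ v, f v = f₀ v := fun v => rfl
  let e₀ : LinearMap.range (T : E →ₗ[ℂ] F) →ₗ[ℂ]
      (LinearMap.range (T : E →ₗ[ℂ] F)).topologicalClosure :=
    Submodule.inclusion (Submodule.le_topologicalClosure _)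
  have he₀n : ∀ v, ‖e₀ v‖ = ‖v‖ := fun v => rfl
  let e : LinearMap.range (T : E →ₗ[ℂ] F) →L[ℂ]
      (LinearMap.range (T : E →ₗ[ℂ] F)).topologicalClosure :=
    e₀.mkContinuous 1 (fun v => by rw [he₀n, one_mul])
  have he : ∀ v, ((e v : F)) = (v : F) := fun v => rfl
  have he_iso : Isometry e :=
    AddMonoidHomClass.isometry_of_norm e (fun v => he₀n v)
  have h_dense : DenseRange e := by
    refine Topology.IsInducing.subtypeVal.dense_iff.2 fun u => ?_
    have hu : (u : F) ∈ closure (LinearMap.range (T : E →ₗ[ℂ] F) : Set F) := by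
      have h2 := Submodule.topologicalClosure_coe (LinearMap.range (T : E →ₗ[ℂ] F))
      have h3 : (u : F) ∈ (((LinearMap.range (T : E →ₗ[ℂ] F)).topologicalClosure :
          Submodule ℂ F) : Set F) := u.2
      exact (Set.ext_iff.mp h2 _).mp h3
    convert hu using 2
    ext y
    constructor
    · rintro ⟨w, ⟨v, rfl⟩, rfl⟩
      exact v.2
    · intro hy
      exact ⟨e ⟨y, hy⟩, ⟨⟨y, hy⟩, rfl⟩, rfl⟩
  have h_uind : IsUniformInducing e := he_iso.isUniformInducing
  let W := f.extend e
  have hWe : ∀ v, W (e v) = f v := fun v =>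
    ContinuousLinearMap.extend_eq (f := f) (e := e) h_dense h_uind v
  have ind : ∀ (p : (LinearMap.range (T : E →ₗ[ℂ] F)).topologicalClosure → Prop),
      IsClosed {u | p u} →
      (∀ x : E, p ⟨T x, Submodule.le_topologicalClosure _ (LinearMap.mem_range_self _ x)⟩) →
      ∀ u, p u := by
    intro p hclosed hbase u
    refine h_dense.induction_on u hclosed ?_
    rintro ⟨v, hv⟩
    obtain ⟨x, hx⟩ := hv
    have : e ⟨T x, LinearMap.mem_range_self _ x⟩ =
        (⟨T x, Submodule.le_topologicalClosure _ (LinearMap.mem_range_self _ x)⟩ :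
          (LinearMap.range (T : E →ₗ[ℂ] F)).topologicalClosure) := rfl
    have h2 : (⟨v, ⟨x, hx⟩⟩ : LinearMap.range (T : E →ₗ[ℂ] F)) =
        ⟨T x, LinearMap.mem_range_self _ x⟩ := Subtype.ext hx.symm
    rw [h2, this]
    exact hbase x
  have hWx : ∀ x : E,
      W ⟨T x, Submodule.le_topologicalClosure _ (LinearMap.mem_range_self _ x)⟩ = g x := by
    intro x
    have := hWe ⟨T x, LinearMap.mem_range_self _ x⟩
    rw [hf, hf₀] at this
    exact this
  have hWn : ∀ u, ‖W u‖ = ‖u‖ := by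
    refine ind _ ?_ ?_
    · exact isClosed_eq (continuous_norm.comp W.continuous) continuous_subtype_val.norm
    · intro x
      rw [hWx x, hnorm]
      rfl
  exact ⟨W, hWx, hWn, ind⟩


-- square helper
theorem sq_norm_eq {a b : ℝ} (ha : 0 ≤ a) (hb : 0 ≤ b) (h : a ^ 2 = b ^ 2) : a = b := by
  nlinarith

set_option maxHeartbeats 1000000 in
theorem unique_lower_triangular_isometry
    {H₁ H₂ K₁ K₂ K₁' K₂' : Type*}
    [NormedAddCommGroup H₁] [InnerProductSpace ℂ H₁] [CompleteSpace H₁]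
    [NormedAddCommGroup H₂] [InnerProductSpace ℂ H₂] [CompleteSpace H₂]
    [NormedAddCommGroup K₁] [InnerProductSpace ℂ K₁] [CompleteSpace K₁]
    [NormedAddCommGroup K₂] [InnerProductSpace ℂ K₂] [CompleteSpace K₂]
    [NormedAddCommGroup K₁'] [InnerProductSpace ℂ K₁'] [CompleteSpace K₁']
    [NormedAddCommGroup K₂'] [InnerProductSpace ℂ K₂'] [CompleteSpace K₂']
    (P : H₁ →L[ℂ] K₁) (Q : H₁ →L[ℂ] K₂) (R : H₂ →L[ℂ] K₂)
    (P' : H₁ →L[ℂ] K₁') (Q' : H₁ →L[ℂ] K₂') (R' : H₂ →L[ℂ] K₂')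
    (h11 : P.adjoint ∘L P + Q.adjoint ∘L Q = P'.adjoint ∘L P' + Q'.adjoint ∘L Q')
    (h21 : Q.adjoint ∘L R = Q'.adjoint ∘L R')
    (h22 : R.adjoint ∘L R = R'.adjoint ∘L R')
    (hQR : Set.range Q ⊆ closure (Set.range R)) :
    ∃! V : ((LinearMap.range (P : H₁ →ₗ[ℂ] K₁)).topologicalClosure →L[ℂ] K₁') ×
           ((LinearMap.range (P : H₁ →ₗ[ℂ] K₁)).topologicalClosure →L[ℂ] K₂') ×
           ((LinearMap.range (R : H₂ →ₗ[ℂ] K₂)).topologicalClosure →L[ℂ] K₂'),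
      (∀ (u : (LinearMap.range (P : H₁ →ₗ[ℂ] K₁)).topologicalClosure)
         (w : (LinearMap.range (R : H₂ →ₗ[ℂ] K₂)).topologicalClosure),
         ‖V.1 u‖ ^ 2 + ‖V.2.1 u + V.2.2 w‖ ^ 2 = ‖(u : K₁)‖ ^ 2 + ‖(w : K₂)‖ ^ 2) ∧
      (∀ x : H₁,
        V.1 ⟨P x, Submodule.le_topologicalClosure _ (LinearMap.mem_range_self _ x)⟩ = P' x) ∧
      (∀ x : H₁,
        V.2.1 ⟨P x, Submodule.le_topologicalClosure _ (LinearMap.mem_range_self _ x)⟩ +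
          V.2.2 ⟨Q x, by
            have h := hQR ⟨x, rfl⟩
            rwa [← SetLike.mem_coe, Submodule.topologicalClosure_coe,
              LinearMap.coe_range, ContinuousLinearMap.coe_coe]⟩ = Q' x) ∧
      (∀ y : H₂,
        V.2.2 ⟨R y, Submodule.le_topologicalClosure _ (LinearMap.mem_range_self _ y)⟩ = R' y) := by
  classical
  -- membership of Q x in closure of range R
  have hQmem : ∀ x : H₁, Q x ∈ (LinearMap.range (R : H₂ →ₗ[ℂ] K₂)).topologicalClosure := by
    intro x
    have h := hQR ⟨x, rfl⟩
    rwa [← SetLike.mem_coe, Submodule.topologicalClosure_coe,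
      LinearMap.coe_range, ContinuousLinearMap.coe_coe]
  -- pointwise forms of the hypotheses
  have h22' : ∀ y z : H₂, ⟪R y, R z⟫ = ⟪R' y, R' z⟫ := by
    intro y z
    have h := ContinuousLinearMap.ext_iff.mp h22 z
    simp only [ContinuousLinearMap.comp_apply] at h
    calc ⟪R y, R z⟫ = ⟪y, R.adjoint (R z)⟫ := (ContinuousLinearMap.adjoint_inner_right R y (R z)).symm
      _ = ⟪y, R'.adjoint (R' z)⟫ := by rw [h]
      _ = ⟪R' y, R' z⟫ := ContinuousLinearMap.adjoint_inner_right R' y (R' z)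
  have hRR : ∀ y : H₂, ‖R' y‖ = ‖R y‖ := by
    intro y
    have h := h22' y y
    rw [inner_self_eq_norm_sq_to_K, inner_self_eq_norm_sq_to_K] at h
    have h2 : ‖R y‖ ^ 2 = ‖R' y‖ ^ 2 := by exact_mod_cast h
    exact sq_norm_eq (norm_nonneg _) (norm_nonneg _) h2.symm
  have h21' : ∀ (x : H₁) (y : H₂), ⟪R y, Q x⟫ = ⟪R' y, Q' x⟫ := by
    intro x y
    have h := ContinuousLinearMap.ext_iff.mp h21 y
    simp only [ContinuousLinearMap.comp_apply] at h
    calc ⟪R y, Q x⟫ = ⟪Q.adjoint (R y), x⟫ := (ContinuousLinearMap.adjoint_inner_left Q x (R y)).symm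
      _ = ⟪Q'.adjoint (R' y), x⟫ := by rw [h]
      _ = ⟪R' y, Q' x⟫ := ContinuousLinearMap.adjoint_inner_left Q' x (R' y)
  have h11' : ∀ x : H₁, ‖P x‖ ^ 2 + ‖Q x‖ ^ 2 = ‖P' x‖ ^ 2 + ‖Q' x‖ ^ 2 := by
    intro x
    have h := ContinuousLinearMap.ext_iff.mp h11 x
    simp only [ContinuousLinearMap.add_apply, ContinuousLinearMap.comp_apply] at h
    have h2 : ⟪P x, P x⟫ + ⟪Q x, Q x⟫ = ⟪P' x, P' x⟫ + ⟪Q' x, Q' x⟫ := by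
      calc ⟪P x, P x⟫ + ⟪Q x, Q x⟫
          = ⟪x, P.adjoint (P x)⟫ + ⟪x, Q.adjoint (Q x)⟫ := by
            rw [ContinuousLinearMap.adjoint_inner_right, ContinuousLinearMap.adjoint_inner_right]
        _ = ⟪x, P.adjoint (P x) + Q.adjoint (Q x)⟫ := (inner_add_right _ _ _).symm
        _ = ⟪x, P'.adjoint (P' x) + Q'.adjoint (Q' x)⟫ := by rw [h]
        _ = ⟪x, P'.adjoint (P' x)⟫ + ⟪x, Q'.adjoint (Q' x)⟫ := inner_add_right _ _ _
        _ = ⟪P' x, P' x⟫ + ⟪Q' x, Q' x⟫ := by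
            rw [ContinuousLinearMap.adjoint_inner_right, ContinuousLinearMap.adjoint_inner_right]
    simp only [inner_self_eq_norm_sq_to_K] at h2
    exact_mod_cast h2
  -- construct V₂₂
  obtain ⟨V₂₂, hV22, hV22n, indR⟩ := aux_extend R (R' : H₂ →ₗ[ℂ] K₂') (fun y => hRR y)
  -- V₂₂ preserves inner products
  have hV22inner : ∀ v w : (LinearMap.range (R : H₂ →ₗ[ℂ] K₂)).topologicalClosure, ⟪V₂₂ v, V₂₂ w⟫ = ⟪(v : K₂), (w : K₂)⟫ := by
    intro v w
    let J : (LinearMap.range (R : H₂ →ₗ[ℂ] K₂)).topologicalClosure →ₗᵢ[ℂ] K₂' := ⟨(V₂₂ : (LinearMap.range (R : H₂ →ₗ[ℂ] K₂)).topologicalClosure →ₗ[ℂ] K₂'), hV22n⟩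
    have := J.inner_map_map v w
    simpa [J, Submodule.coe_inner] using this
  -- the codomain-restricted Q
  obtain ⟨Vq, hVq⟩ : ∃ Vq : H₁ →L[ℂ] (LinearMap.range (R : H₂ →ₗ[ℂ] K₂)).topologicalClosure,
      ∀ x, ((Vq x : K₂)) = Q x := ⟨Q.codRestrict _ hQmem, fun _ => rfl⟩
  -- key identity
  have hkey : ∀ (x : H₁) (w : (LinearMap.range (R : H₂ →ₗ[ℂ] K₂)).topologicalClosure), ⟪(w : K₂), Q x⟫ = ⟪V₂₂ w, Q' x⟫ := by
    intro x
    refine indR (fun w => ⟪(w : K₂), Q x⟫ = ⟪V₂₂ w, Q' x⟫) ?_ ?_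
    · exact isClosed_eq (continuous_subtype_val.inner continuous_const)
        ((V₂₂.continuous).inner continuous_const)
    · intro y
      rw [hV22 y]
      exact h21' x y
  -- the defect operator
  obtain ⟨D, hD⟩ : ∃ D : H₁ →L[ℂ] K₂', ∀ x, D x = Q' x - V₂₂ (Vq x) :=
    ⟨Q' - V₂₂.comp Vq, fun _ => rfl⟩
  have hDorth : ∀ (x : H₁) (w : (LinearMap.range (R : H₂ →ₗ[ℂ] K₂)).topologicalClosure), ⟪D x, V₂₂ w⟫ = 0 := by
    intro x w
    rw [hD, inner_sub_left]
    have h1 : ⟪Q' x, V₂₂ w⟫ = ⟪Q x, (w : K₂)⟫ := by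
      have := hkey x w
      calc ⟪Q' x, V₂₂ w⟫ = starRingEnd ℂ ⟪V₂₂ w, Q' x⟫ := (inner_conj_symm _ _).symm
        _ = starRingEnd ℂ ⟪(w : K₂), Q x⟫ := by rw [← this]
        _ = ⟪Q x, (w : K₂)⟫ := inner_conj_symm _ _
    have h2 : ⟪V₂₂ (Vq x), V₂₂ w⟫ = ⟪Q x, (w : K₂)⟫ := by
      rw [hV22inner, hVq]
    rw [h1, h2, sub_self]
  -- norm identity for (P', D)
  have hDnorm : ∀ x : H₁, ‖P' x‖ ^ 2 + ‖D x‖ ^ 2 = ‖P x‖ ^ 2 := by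
    intro x
    have hip : ⟪Q' x, V₂₂ (Vq x)⟫ = ⟪Q x, Q x⟫ := by
      have h1 : ⟪Q' x, V₂₂ (Vq x)⟫ = ⟪Q x, ((Vq x : (LinearMap.range (R : H₂ →ₗ[ℂ] K₂)).topologicalClosure) : K₂)⟫ := by
        calc ⟪Q' x, V₂₂ (Vq x)⟫ = starRingEnd ℂ ⟪V₂₂ (Vq x), Q' x⟫ := (inner_conj_symm _ _).symm
          _ = starRingEnd ℂ ⟪((Vq x : (LinearMap.range (R : H₂ →ₗ[ℂ] K₂)).topologicalClosure) : K₂), Q x⟫ := by rw [← hkey x (Vq x)]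
          _ = ⟪Q x, ((Vq x : (LinearMap.range (R : H₂ →ₗ[ℂ] K₂)).topologicalClosure) : K₂)⟫ := inner_conj_symm _ _
      rw [h1, hVq]
    have hre : RCLike.re ⟪Q' x, V₂₂ (Vq x)⟫ = ‖Q x‖ ^ 2 := by
      rw [hip]
      exact inner_self_eq_norm_sq (Q x)
    have hexp : ‖D x‖ ^ 2 = ‖Q' x‖ ^ 2 - ‖Q x‖ ^ 2 := by
      rw [hD, norm_sub_sq (𝕜 := ℂ) (E := K₂') (Q' x) (V₂₂ (Vq x)), hre]
      have : ‖V₂₂ (Vq x)‖ = ‖Q x‖ := by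
        rw [hV22n]
        show ‖((Vq x : (LinearMap.range (R : H₂ →ₗ[ℂ] K₂)).topologicalClosure) : K₂)‖ = ‖Q x‖
        rw [hVq]
      rw [this]
      ring
    have := h11' x
    rw [hexp]
    linarith
  -- combined map into WithLp 2 (K₁' × K₂')
  obtain ⟨Gmap, hGfst, hGsnd⟩ : ∃ Gmap : H₁ →ₗ[ℂ] WithLp 2 (K₁' × K₂'),
      (∀ x, (Gmap x).fst = P' x) ∧ (∀ x, (Gmap x).snd = D x) :=
    ⟨(WithLp.linearEquiv 2 ℂ (K₁' × K₂')).symm.toLinearMap.comp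
      ((P' : H₁ →ₗ[ℂ] K₁').prod (D : H₁ →ₗ[ℂ] K₂')), fun _ => rfl, fun _ => rfl⟩
  have hGnorm : ∀ x, ‖Gmap x‖ = ‖P x‖ := by
    intro x
    refine sq_norm_eq (norm_nonneg _) (norm_nonneg _) ?_
    rw [WithLp.prod_norm_sq_eq_of_L2, hGfst, hGsnd]
    exact hDnorm x
  obtain ⟨W, hW, hWn, indP⟩ := aux_extend P Gmap hGnorm
  -- project to the two components
  obtain ⟨V₁₁, hV11e⟩ : ∃ V₁₁ : (LinearMap.range (P : H₁ →ₗ[ℂ] K₁)).topologicalClosure →L[ℂ] K₁',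
      ∀ u, V₁₁ u = (W u).fst :=
    ⟨(ContinuousLinearMap.fst ℂ K₁' K₂').comp
      (((WithLp.prodContinuousLinearEquiv 2 ℂ K₁' K₂' :
        WithLp 2 (K₁' × K₂') →L[ℂ] K₁' × K₂')).comp W), fun _ => rfl⟩
  obtain ⟨V₂₁, hV21e⟩ : ∃ V₂₁ : (LinearMap.range (P : H₁ →ₗ[ℂ] K₁)).topologicalClosure →L[ℂ] K₂',
      ∀ u, V₂₁ u = (W u).snd :=
    ⟨(ContinuousLinearMap.snd ℂ K₁' K₂').comp
      (((WithLp.prodContinuousLinearEquiv 2 ℂ K₁' K₂' :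
        WithLp 2 (K₁' × K₂') →L[ℂ] K₁' × K₂')).comp W), fun _ => rfl⟩
  have hV11 : ∀ x : H₁,
      V₁₁ ⟨P x, Submodule.le_topologicalClosure _ (LinearMap.mem_range_self _ x)⟩ = P' x := by
    intro x
    rw [hV11e, hW, hGfst]
  have hV21 : ∀ x : H₁,
      V₂₁ ⟨P x, Submodule.le_topologicalClosure _ (LinearMap.mem_range_self _ x)⟩ = D x := by
    intro x
    rw [hV21e, hW, hGsnd]
  -- norm splitting on closure of ran P
  have hWsplit : ∀ u, ‖V₁₁ u‖ ^ 2 + ‖V₂₁ u‖ ^ 2 = ‖(u : K₁)‖ ^ 2 := by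
    intro u
    rw [hV11e, hV21e, ← WithLp.prod_norm_sq_eq_of_L2, hWn]
    rfl
  -- orthogonality on closure
  have hV21orth : ∀ (w : (LinearMap.range (R : H₂ →ₗ[ℂ] K₂)).topologicalClosure) u,
      ⟪V₂₁ u, V₂₂ w⟫ = 0 := by
    intro w
    refine indP (fun u => ⟪V₂₁ u, V₂₂ w⟫ = 0) ?_ ?_
    · exact isClosed_eq ((V₂₁.continuous).inner continuous_const) continuous_const
    · intro x
      rw [hV21 x]
      exact hDorth x w
  -- assemble
  refine ⟨⟨V₁₁, V₂₁, V₂₂⟩, ⟨?_, ?_, ?_, ?_⟩, ?_⟩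
  · -- isometry condition
    intro u w
    have horth := hV21orth w u
    have hsplit : ‖V₂₁ u + V₂₂ w‖ ^ 2 = ‖V₂₁ u‖ ^ 2 + ‖V₂₂ w‖ ^ 2 := by
      rw [norm_add_sq (𝕜 := ℂ) (V₂₁ u) (V₂₂ w), horth, map_zero]
      ring
    have h1 := hWsplit u
    have h2 : ‖V₂₂ w‖ = ‖(w : K₂)‖ := hV22n w
    show ‖V₁₁ u‖ ^ 2 + ‖V₂₁ u + V₂₂ w‖ ^ 2 = ‖(u : K₁)‖ ^ 2 + ‖(w : K₂)‖ ^ 2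
    rw [hsplit, h2]
    linarith
  · exact hV11
  · -- middle condition
    intro x
    have hq : (⟨Q x, hQmem x⟩ :
        (LinearMap.range (R : H₂ →ₗ[ℂ] K₂)).topologicalClosure) = Vq x :=
      Subtype.ext (hVq x).symm
    show V₂₁ ⟨P x, Submodule.le_topologicalClosure _ (LinearMap.mem_range_self _ x)⟩ +
      V₂₂ ⟨Q x, hQmem x⟩ = Q' x
    rw [hV21 x, hq, hD, sub_add_cancel]
  · exact hV22
  · -- uniqueness
    rintro ⟨A, B, C⟩ ⟨-, hA, hB, hC⟩
    have hC2 : ∀ w, C w = V₂₂ w :=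
      indR (fun w => C w = V₂₂ w) (isClosed_eq C.continuous V₂₂.continuous)
        (fun y => (hC y).trans (hV22 y).symm)
    have hA2 : ∀ u, A u = V₁₁ u :=
      indP (fun u => A u = V₁₁ u) (isClosed_eq A.continuous V₁₁.continuous)
        (fun x => (hA x).trans (hV11 x).symm)
    have hB2 : ∀ u, B u = V₂₁ u := by
      refine indP (fun u => B u = V₂₁ u) (isClosed_eq B.continuous V₂₁.continuous) ?_
      intro x
      have h := hB x
      have hq : (⟨Q x, hQmem x⟩ :
          (LinearMap.range (R : H₂ →ₗ[ℂ] K₂)).topologicalClosure) = Vq x :=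
        Subtype.ext (hVq x).symm
      have h' : B ⟨P x, Submodule.le_topologicalClosure _ (LinearMap.mem_range_self _ x)⟩ +
          C (Vq x) = Q' x := by
        rw [← hq]
        exact h
      rw [hC2] at h'
      rw [hV21 x, hD, eq_sub_of_add_eq h']
    exact Prod.ext (ContinuousLinearMap.ext hA2)
      (Prod.ext (ContinuousLinearMap.ext hB2) (ContinuousLinearMap.ext hC2))
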